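/- Assume (H0), let f : ℝ₊ → ℝ₊ and g : ℝ₊ → ℝ₊ be continuous, β > 0, and let φ : ℝ → ℝ₊ be a bounded, twice continuously differentiable solution of the profile equation φ''(t) − c·φ'(t) − f(φ(t)) + ∫₀^∞∫_ℝ K(s,w)·g(φ(t − cs − w)) dw ds = 0 for all t ∈ ℝ. Then, with (𝒢φ)(t) := ∫₀^∞∫_ℝ K(s,w)·g(φ(t − cs − w)) dw ds + β·φ(t) − f(φ(t)), for every t ∈ ℝ one has φ(t) = σ(c)⁻¹·(∫_{−∞}^t e^{ν(c)(t−s)}·(𝒢φ)(s) ds + ∫_t^{+∞} e^{μ(c)(t−s)}·(𝒢φ)(s) ds) = ∫_ℝ k₁(t−s)·(𝒢φ)(s) ds. -/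

import Mathlib

open MeasureTheory Filter Set

noncomputable section

/-- positive root `μ(c)` of `z² - cz - β = 0`. -/
def muRoot (β c : ℝ) : ℝ := (c + Real.sqrt (c ^ 2 + 4 * β)) / 2

/-- negative root `ν(c)` of `z² - cz - β = 0`. -/
def nuRoot (β c : ℝ) : ℝ := (c - Real.sqrt (c ^ 2 + 4 * β)) / 2

/-- the Green's function kernel `k₁`. -/
def k1 (β c : ℝ) (s : ℝ) : ℝ :=
  if 0 ≤ s then Real.exp (nuRoot β c * s) / Real.sqrt (c ^ 2 + 4 * β)
  else Real.exp (muRoot β c * s) / Real.sqrt (c ^ 2 + 4 * β)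

/-- `(𝒢φ)(t) = ∫₀^∞∫_ℝ K(s,w) g(φ(t-cs-w)) dw ds + βφ(t) - f(φ(t))`. -/
def Gop (K : ℝ → ℝ → ℝ) (f g : ℝ → ℝ) (β c : ℝ) (φ : ℝ → ℝ) (t : ℝ) : ℝ :=
  (∫ s in Set.Ioi (0:ℝ), ∫ w : ℝ, K s w * g (φ (t - c * s - w))) + β * φ t - f (φ t)

/- ### Auxiliary lemmas -/

lemma aux_expIic {b : ℝ} (hb : 0 < b) (t : ℝ) :
    IntegrableOn (fun s : ℝ => Real.exp (b * s)) (Iic t) := by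
  have A : MeasurableEmbedding (fun x : ℝ => -x) :=
    (Homeomorph.neg ℝ).isClosedEmbedding.measurableEmbedding
  have h1 : (volume : Measure ℝ).restrict (Iic t)
      = Measure.map (fun x : ℝ => -x) (volume.restrict (Ici (-t))) := by
    rw [show (volume : Measure ℝ).restrict (Iic t)
        = (Measure.map (fun x : ℝ => -x) volume).restrict (Iic t) by
          rw [Measure.map_neg_eq_self],
      Measure.restrict_map A.measurable measurableSet_Iic]
    congr 1
    ext x
    simp [neg_le]
  rw [IntegrableOn, h1, A.integrable_map_iff]
  have h2 : IntegrableOn (fun x : ℝ => Real.exp (-b * x)) (Ici (-t)) := by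
    rw [integrableOn_Ici_iff_integrableOn_Ioi]
    exact exp_neg_integrableOn_Ioi _ hb
  exact h2.congr (ae_of_all _ fun x => congrArg Real.exp (by ring))

lemma aux_expMulIic {b t C : ℝ} (hb : b < 0) {G : ℝ → ℝ} (hGc : Continuous G)
    (hC : ∀ s, |G s| ≤ C) :
    IntegrableOn (fun s => Real.exp (b * (t - s)) * G s) (Iic t) := by
  apply Integrable.mono' (g := fun s => (Real.exp (b * t) * C) * Real.exp ((-b) * s))
  · exact ((aux_expIic (by linarith) t).const_mul _)
  · exact (Continuous.aestronglyMeasurable (by fun_prop)).restrict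
  · refine ae_of_all _ fun s => ?_
    have h1 : ‖Real.exp (b * (t - s)) * G s‖ = Real.exp (b * (t - s)) * |G s| := by
      rw [norm_mul, Real.norm_eq_abs, abs_of_pos (Real.exp_pos _), Real.norm_eq_abs]
    rw [h1]
    calc Real.exp (b * (t - s)) * |G s| ≤ Real.exp (b * (t - s)) * C :=
          mul_le_mul_of_nonneg_left (hC s) (Real.exp_pos _).le
      _ = Real.exp (b * t) * C * Real.exp (-b * s) := by
          rw [show b * (t - s) = b * t + -b * s by ring, Real.exp_add]; ring

lemma aux_expMulIoi {b t C : ℝ} (hb : 0 < b) {G : ℝ → ℝ} (hGc : Continuous G)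
    (hC : ∀ s, |G s| ≤ C) :
    IntegrableOn (fun s => Real.exp (b * (t - s)) * G s) (Ioi t) := by
  apply Integrable.mono' (g := fun s => (Real.exp (b * t) * C) * Real.exp (-b * s))
  · exact ((exp_neg_integrableOn_Ioi t hb).const_mul _)
  · exact (Continuous.aestronglyMeasurable (by fun_prop)).restrict
  · refine ae_of_all _ fun s => ?_
    have h1 : ‖Real.exp (b * (t - s)) * G s‖ = Real.exp (b * (t - s)) * |G s| := by
      rw [norm_mul, Real.norm_eq_abs, abs_of_pos (Real.exp_pos _), Real.norm_eq_abs]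
    rw [h1]
    calc Real.exp (b * (t - s)) * |G s| ≤ Real.exp (b * (t - s)) * C :=
          mul_le_mul_of_nonneg_left (hC s) (Real.exp_pos _).le
      _ = Real.exp (b * t) * C * Real.exp (-b * s) := by
          rw [show b * (t - s) = b * t + -b * s by ring, Real.exp_add]; ring

lemma aux_expTendstoBot {b t : ℝ} (hb : b < 0) :
    Tendsto (fun s : ℝ => Real.exp (b * (t - s))) atBot (nhds 0) := by
  apply Real.tendsto_exp_atBot.comp
  have h1 : Tendsto (fun s : ℝ => t - s) atBot atTop := by
    have := tendsto_atTop_add_const_left (f := fun s : ℝ => -s) (l := atBot) t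
      tendsto_neg_atBot_atTop
    simpa [sub_eq_add_neg] using this
  exact h1.const_mul_atTop_of_neg hb

lemma aux_expTendstoTop {b t : ℝ} (hb : 0 < b) :
    Tendsto (fun s : ℝ => Real.exp (b * (t - s))) atTop (nhds 0) := by
  apply Real.tendsto_exp_atBot.comp
  have h1 : Tendsto (fun s : ℝ => t - s) atTop atBot := by
    have := tendsto_atBot_add_const_left (f := fun s : ℝ => -s) (l := atTop) t
      tendsto_neg_atTop_atBot
    simpa [sub_eq_add_neg] using this
  exact h1.const_mul_atBot hb

lemma aux_deriv_bound {φ : ℝ → ℝ} {c M C₁ : ℝ}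
    (hd : Differentiable ℝ φ)
    (hd2 : ∀ x, HasDerivAt (deriv φ) (deriv (deriv φ) x) x)
    (hd1c : Continuous (deriv φ))
    (hd2c : Continuous (deriv (deriv φ)))
    (hM : ∀ t, |φ t| ≤ M)
    (hC : ∀ t, |c * deriv φ t - deriv (deriv φ) t| ≤ C₁) :
    ∀ t, |deriv φ t| ≤ Real.exp |c| * (2 * M + C₁) := by
  intro t
  obtain ⟨ξ, hξ, hslope⟩ := exists_deriv_eq_slope φ (show t - 1 < t by linarith)
    (hd.continuous.continuousOn) (hd.differentiableOn)
  have hξ1 : t - 1 < ξ := hξ.1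
  have hξ2 : ξ < t := hξ.2
  have hξabs : |deriv φ ξ| ≤ 2 * M := by
    rw [hslope, show t - (t - 1) = 1 by ring, div_one, abs_le]
    constructor <;> nlinarith [abs_le.mp (hM t), abs_le.mp (hM (t - 1))]
  set F : ℝ → ℝ := fun s => Real.exp (-(c * s)) * deriv φ s with hFdef
  have hF : ∀ s, HasDerivAt F
      (Real.exp (-(c * s)) * (deriv (deriv φ) s - c * deriv φ s)) s := by
    intro s
    have h1 : HasDerivAt (fun s : ℝ => -(c * s)) (-c) s := by
      exact ((hasDerivAt_id s).const_mul c).neg.congr_deriv (by ring)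
    have h2 := (h1.exp).mul (hd2 s)
    refine h2.congr_deriv ?_
    ring
  have heq : (∫ s in ξ..t, Real.exp (-(c * s)) * (deriv (deriv φ) s - c * deriv φ s))
      = F t - F ξ := by
    apply intervalIntegral.integral_eq_sub_of_hasDerivAt (fun x _ => hF x)
    apply Continuous.intervalIntegrable
    exact (Real.continuous_exp.comp (by fun_prop)).mul (hd2c.sub (continuous_const.mul hd1c))
  have hexpbd : ∀ x, t - 1 ≤ x → x ≤ t → Real.exp (-(c * x)) ≤ Real.exp (|c| - c * t) := by
    intro x h1 h2
    apply Real.exp_le_exp.mpr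
    nlinarith [le_abs_self c, neg_abs_le c]
  have hbd : ∀ x ∈ Set.uIoc ξ t,
      ‖Real.exp (-(c * x)) * (deriv (deriv φ) x - c * deriv φ x)‖
        ≤ Real.exp (|c| - c * t) * C₁ := by
    intro x hx
    rw [Set.uIoc_of_le hξ2.le] at hx
    have hC' : |deriv (deriv φ) x - c * deriv φ x| ≤ C₁ := by
      rw [abs_sub_comm]; exact hC x
    rw [norm_mul, Real.norm_eq_abs, Real.norm_eq_abs, abs_of_pos (Real.exp_pos _)]
    exact mul_le_mul (hexpbd x (by linarith [hx.1]) hx.2) hC'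
      (abs_nonneg _) (Real.exp_pos _).le
  have hint : ‖∫ s in ξ..t, Real.exp (-(c * s)) * (deriv (deriv φ) s - c * deriv φ s)‖
      ≤ Real.exp (|c| - c * t) * C₁ * |t - ξ| :=
    intervalIntegral.norm_integral_le_of_norm_le_const hbd
  have htξ : |t - ξ| ≤ 1 := by rw [abs_le]; constructor <;> linarith
  have hC₁0 : 0 ≤ C₁ := le_trans (abs_nonneg _) (hC t)
  have hFξ : |F ξ| ≤ Real.exp (|c| - c * t) * (2 * M) := by
    rw [hFdef]
    simp only []
    rw [abs_mul, abs_of_pos (Real.exp_pos _)]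
    exact mul_le_mul (hexpbd ξ hξ1.le hξ2.le) hξabs (abs_nonneg _) (Real.exp_pos _).le
  have hFt : |F t| ≤ Real.exp (|c| - c * t) * (2 * M + C₁) := by
    have h1 : F t = F ξ + ∫ s in ξ..t,
        Real.exp (-(c * s)) * (deriv (deriv φ) s - c * deriv φ s) := by
      rw [heq]; ring
    rw [h1]
    calc |F ξ + _| ≤ |F ξ| + ‖∫ s in ξ..t,
          Real.exp (-(c * s)) * (deriv (deriv φ) s - c * deriv φ s)‖ := abs_add_le _ _
      _ ≤ Real.exp (|c| - c * t) * (2 * M) + Real.exp (|c| - c * t) * C₁ * |t - ξ| :=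
          add_le_add hFξ hint
      _ ≤ Real.exp (|c| - c * t) * (2 * M + C₁) := by
          nlinarith [Real.exp_pos (|c| - c * t), mul_le_mul_of_nonneg_left htξ
            (mul_nonneg (Real.exp_pos (|c| - c * t)).le hC₁0)]
  have hkey : Real.exp (-(c * t)) * |deriv φ t|
      ≤ Real.exp (-(c * t)) * (Real.exp |c| * (2 * M + C₁)) := by
    have h2 : |F t| = Real.exp (-(c * t)) * |deriv φ t| := by
      rw [hFdef]; simp only []
      rw [abs_mul, abs_of_pos (Real.exp_pos _)]
    have h3 : Real.exp (|c| - c * t) = Real.exp |c| * Real.exp (-(c * t)) := by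
      rw [← Real.exp_add]; ring_nf
    rw [h2] at hFt
    calc Real.exp (-(c * t)) * |deriv φ t| ≤ Real.exp (|c| - c * t) * (2 * M + C₁) := hFt
      _ = Real.exp (-(c * t)) * (Real.exp |c| * (2 * M + C₁)) := by rw [h3]; ring
  exact (mul_le_mul_iff_right₀ (Real.exp_pos _)).mp hkey

lemma aux_double_int_bound {K : ℝ → ℝ → ℝ}
    (hKnn : ∀ s w, 0 ≤ K s w)
    (hKint : IntegrableOn (fun x : ℝ × ℝ => K x.1 x.2) (Set.Ioi 0 ×ˢ Set.univ))
    (hKnorm : (∫ s in Set.Ioi (0:ℝ), ∫ w : ℝ, K s w) = 1)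
    {h : ℝ → ℝ} (hhnn : ∀ x, 0 ≤ h x) {Mg : ℝ}
    (hMg : ∀ x, h x ≤ Mg) (t c : ℝ) :
    |∫ s in Set.Ioi (0:ℝ), ∫ w : ℝ, K s w * h (t - c * s - w)| ≤ Mg := by
  have hK2 : Integrable (fun x : ℝ × ℝ => K x.1 x.2)
      ((volume.restrict (Set.Ioi 0)).prod volume) := by
    rw [Measure.restrict_prod_eq_prod_univ]
    rw [IntegrableOn, Measure.volume_eq_prod] at hKint
    exact hKint
  have hae : ∀ᵐ s ∂(volume.restrict (Set.Ioi (0:ℝ))),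
      Integrable (fun w => K s w) volume := hK2.prod_right_ae
  have hmarg : Integrable (fun s => ∫ w, K s w) (volume.restrict (Set.Ioi (0:ℝ))) :=
    hK2.integral_prod_left
  have hFnn : ∀ s, 0 ≤ ∫ w : ℝ, K s w * h (t - c * s - w) := fun s =>
    integral_nonneg fun w => mul_nonneg (hKnn s w) (hhnn _)
  have hle : (fun s => ∫ w : ℝ, K s w * h (t - c * s - w))
      ≤ᵐ[volume.restrict (Set.Ioi (0:ℝ))] fun s => Mg * ∫ w, K s w := by
    filter_upwards [hae] with s hs
    have hint : Integrable (fun w => Mg * K s w) volume := hs.const_mul Mg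
    have h1 : (∫ w : ℝ, K s w * h (t - c * s - w)) ≤ ∫ w : ℝ, Mg * K s w := by
      apply integral_mono_of_nonneg
      · exact ae_of_all _ fun w => mul_nonneg (hKnn s w) (hhnn _)
      · exact hint
      · exact ae_of_all _ fun w => by
          calc K s w * h (t - c * s - w) ≤ K s w * Mg :=
                mul_le_mul_of_nonneg_left (hMg _) (hKnn s w)
            _ = Mg * K s w := mul_comm _ _
    calc (∫ w : ℝ, K s w * h (t - c * s - w)) ≤ ∫ w : ℝ, Mg * K s w := h1
      _ = Mg * ∫ w : ℝ, K s w := integral_const_mul _ _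
  have hupper : (∫ s in Set.Ioi (0:ℝ), ∫ w : ℝ, K s w * h (t - c * s - w)) ≤ Mg := by
    calc (∫ s in Set.Ioi (0:ℝ), ∫ w : ℝ, K s w * h (t - c * s - w))
        ≤ ∫ s in Set.Ioi (0:ℝ), Mg * ∫ w : ℝ, K s w :=
          integral_mono_of_nonneg (ae_of_all _ hFnn) (hmarg.const_mul Mg) hle
      _ = Mg * ∫ s in Set.Ioi (0:ℝ), ∫ w : ℝ, K s w := integral_const_mul _ _
      _ = Mg := by rw [hKnorm, mul_one]
  have hlower : 0 ≤ ∫ s in Set.Ioi (0:ℝ), ∫ w : ℝ, K s w * h (t - c * s - w) :=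
    integral_nonneg hFnn
  have hMg0 : 0 ≤ Mg := le_trans (hhnn 0) (hMg 0)
  rw [abs_le]
  exact ⟨by linarith, hupper⟩

/-- Integral representation of bounded solutions of the profile equation. -/
theorem integral_representation
    (K : ℝ → ℝ → ℝ) (f g : ℝ → ℝ) (β c : ℝ) (φ : ℝ → ℝ)
    (hβ : 0 < β)
    -- (H0)
    (hKmeas : Measurable fun x : ℝ × ℝ => K x.1 x.2)
    (hKnn : ∀ s w, 0 ≤ K s w)
    (hKint : IntegrableOn (fun x : ℝ × ℝ => K x.1 x.2) (Set.Ioi 0 ×ˢ Set.univ))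
    (hKnorm : (∫ s in Set.Ioi (0:ℝ), ∫ w : ℝ, K s w) = 1)
    -- f, g continuous and nonnegative on ℝ₊
    (hgc : ContinuousOn g (Set.Ici 0))
    (hgnn : ∀ s, 0 ≤ s → 0 ≤ g s)
    (hfc : ContinuousOn f (Set.Ici 0))
    (hfnn : ∀ s, 0 ≤ s → 0 ≤ f s)
    -- φ is a bounded nonnegative C² solution of the profile equation
    (hφC2 : ContDiff ℝ 2 φ)
    (hφnn : ∀ t, 0 ≤ φ t)
    (hφbdd : ∃ M, ∀ t, |φ t| ≤ M)
    (hφsol : ∀ t : ℝ, deriv (deriv φ) t - c * deriv φ t - f (φ t)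
      + (∫ s in Set.Ioi (0:ℝ), ∫ w : ℝ, K s w * g (φ (t - c * s - w))) = 0) :
    ∀ t : ℝ,
      φ t = (Real.sqrt (c ^ 2 + 4 * β))⁻¹ *
        ((∫ s in Set.Iic t, Real.exp (nuRoot β c * (t - s)) * Gop K f g β c φ s) +
          ∫ s in Set.Ioi t, Real.exp (muRoot β c * (t - s)) * Gop K f g β c φ s) ∧
      φ t = ∫ s : ℝ, k1 β c (t - s) * Gop K f g β c φ s := by
  -- basic facts about the roots
  have hs4 : (0:ℝ) < c ^ 2 + 4 * β := by nlinarith [sq_nonneg c]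
  have hσpos : 0 < Real.sqrt (c ^ 2 + 4 * β) := Real.sqrt_pos.mpr hs4
  have hσsq : Real.sqrt (c ^ 2 + 4 * β) ^ 2 = c ^ 2 + 4 * β := Real.sq_sqrt hs4.le
  have hadd : muRoot β c + nuRoot β c = c := by unfold muRoot nuRoot; ring
  have hmul : muRoot β c * nuRoot β c = -β := by
    unfold muRoot nuRoot
    linear_combination (-1/4 : ℝ) * hσsq
  have hsub : muRoot β c - nuRoot β c = Real.sqrt (c ^ 2 + 4 * β) := by
    unfold muRoot nuRoot; ring
  have hν : nuRoot β c < 0 := by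
    unfold nuRoot
    nlinarith [hσsq, hσpos, hβ]
  have hμ : 0 < muRoot β c := by
    unfold muRoot
    nlinarith [hσsq, hσpos, hβ]
  -- smoothness facts
  have h2 : ContDiff ℝ ((1:WithTop ℕ∞) + 1) φ := by
    have : ((1:WithTop ℕ∞) + 1) = 2 := by norm_num
    rw [this]; exact hφC2
  obtain ⟨hdiff, -, h1⟩ := contDiff_succ_iff_deriv.mp h2
  obtain ⟨hdiff2, hd2c⟩ := contDiff_one_iff_deriv.mp h1
  have hd1c : Continuous (deriv φ) := h1.continuous
  have hd1 : ∀ x, HasDerivAt φ (deriv φ x) x := fun x => (hdiff x).hasDerivAt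
  have hd2 : ∀ x, HasDerivAt (deriv φ) (deriv (deriv φ) x) x := fun x =>
    (hdiff2 x).hasDerivAt
  -- the key identity for Gop
  have hG : ∀ s, Gop K f g β c φ s = β * φ s + c * deriv φ s - deriv (deriv φ) s := by
    intro s
    have h := hφsol s
    unfold Gop
    linarith
  have hGcont : Continuous (Gop K f g β c φ) := by
    have h : Continuous (fun s : ℝ => β * φ s + c * deriv φ s - deriv (deriv φ) s) :=
      (((continuous_const.mul hφC2.continuous).add
        (continuous_const.mul hd1c)).sub hd2c)
    exact h.congr fun s => (hG s).symm
  -- bounds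
  obtain ⟨M, hM⟩ := hφbdd
  have hM0 : 0 ≤ M := le_trans (abs_nonneg _) (hM 0)
  have hφmem : ∀ x, φ x ∈ Icc (0:ℝ) M := fun x => ⟨hφnn x, (abs_le.mp (hM x)).2⟩
  obtain ⟨Mg, hMg⟩ := (isCompact_Icc : IsCompact (Icc (0:ℝ) M)).exists_bound_of_continuousOn
    (hgc.mono fun x hx => hx.1)
  obtain ⟨Mf, hMf⟩ := (isCompact_Icc : IsCompact (Icc (0:ℝ) M)).exists_bound_of_continuousOn
    (hfc.mono fun x hx => hx.1)
  have hgφle : ∀ x, g (φ x) ≤ Mg := fun x =>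
    le_trans (le_abs_self _) (hMg _ (hφmem x))
  have hgφnn : ∀ x, 0 ≤ g (φ x) := fun x => hgnn _ (hφnn x)
  have hfφ : ∀ x, |f (φ x)| ≤ Mf := fun x => hMf _ (hφmem x)
  have hI : ∀ τ : ℝ, |∫ s in Set.Ioi (0:ℝ), ∫ w : ℝ, K s w * g (φ (τ - c * s - w))| ≤ Mg :=
    fun τ => aux_double_int_bound hKnn hKint hKnorm (h := fun x => g (φ x))
      hgφnn hgφle τ c
  set C : ℝ := Mg + β * M + Mf with hCdef
  have hGb : ∀ s, |Gop K f g β c φ s| ≤ C := by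
    intro s
    unfold Gop
    rw [abs_le]
    constructor <;>
      nlinarith [abs_le.mp (hI s), abs_le.mp (hfφ s), abs_le.mp (hM s), hβ.le]
  set C₁ : ℝ := C + β * M with hC₁def
  have hC₁ : ∀ s, |c * deriv φ s - deriv (deriv φ) s| ≤ C₁ := by
    intro s
    have h := hGb s
    rw [hG s] at h
    rw [abs_le] at h ⊢
    constructor <;> nlinarith [abs_le.mp (hM s), hβ.le]
  set M' : ℝ := Real.exp |c| * (2 * M + C₁) with hM'def
  have hM' : ∀ s, |deriv φ s| ≤ M' :=
    aux_deriv_bound hdiff hd2 hd1c hd2c hM hC₁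
  -- main computation for fixed t
  intro t
  -- derivative identities
  have hPd : ∀ s, HasDerivAt
      (fun s => Real.exp (nuRoot β c * (t - s)) * (muRoot β c * φ s - deriv φ s))
      (Real.exp (nuRoot β c * (t - s)) * Gop K f g β c φ s) s := by
    intro s
    have h1 : HasDerivAt (fun s : ℝ => nuRoot β c * (t - s)) (-(nuRoot β c)) s := by
      simpa using ((hasDerivAt_const s t).sub (hasDerivAt_id s)).const_mul (nuRoot β c)
    have h2 := h1.exp.mul (((hd1 s).const_mul (muRoot β c)).sub (hd2 s))
    refine h2.congr_deriv ?_
    simp only [Pi.sub_apply]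
    symm
    rw [hG s]
    linear_combination (Real.exp (nuRoot β c * (t - s)) * φ s) * hmul
      - (Real.exp (nuRoot β c * (t - s)) * deriv φ s) * hadd
  have hQd : ∀ s, HasDerivAt
      (fun s => Real.exp (muRoot β c * (t - s)) * (nuRoot β c * φ s - deriv φ s))
      (Real.exp (muRoot β c * (t - s)) * Gop K f g β c φ s) s := by
    intro s
    have h1 : HasDerivAt (fun s : ℝ => muRoot β c * (t - s)) (-(muRoot β c)) s := by
      simpa using ((hasDerivAt_const s t).sub (hasDerivAt_id s)).const_mul (muRoot β c)
    have h2 := h1.exp.mul (((hd1 s).const_mul (nuRoot β c)).sub (hd2 s))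
    refine h2.congr_deriv ?_
    simp only [Pi.sub_apply]
    symm
    rw [hG s]
    linear_combination (Real.exp (muRoot β c * (t - s)) * φ s) * hmul
      - (Real.exp (muRoot β c * (t - s)) * deriv φ s) * hadd
  -- integrability
  have hIntν : IntegrableOn (fun s => Real.exp (nuRoot β c * (t - s)) * Gop K f g β c φ s)
      (Iic t) := aux_expMulIic hν hGcont hGb
  have hIntμ : IntegrableOn (fun s => Real.exp (muRoot β c * (t - s)) * Gop K f g β c φ s)
      (Ioi t) := aux_expMulIoi hμ hGcont hGb
  -- limits of boundary terms
  have htendν : Tendsto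
      (fun s => Real.exp (nuRoot β c * (t - s)) * (muRoot β c * φ s - deriv φ s))
      atBot (nhds 0) := by
    apply squeeze_zero_norm (a := fun s => (muRoot β c * M + M') * Real.exp (nuRoot β c * (t - s)))
    · intro s
      rw [norm_mul, Real.norm_eq_abs, Real.norm_eq_abs, abs_of_pos (Real.exp_pos _)]
      have hb : |muRoot β c * φ s - deriv φ s| ≤ muRoot β c * M + M' := by
        calc |muRoot β c * φ s - deriv φ s| ≤ |muRoot β c * φ s| + |deriv φ s| :=
              abs_sub _ _
          _ = |muRoot β c| * |φ s| + |deriv φ s| := by rw [abs_mul]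
          _ ≤ |muRoot β c| * M + M' :=
              add_le_add (mul_le_mul_of_nonneg_left (hM s) (abs_nonneg _)) (hM' s)
          _ = muRoot β c * M + M' := by rw [abs_of_pos hμ]
      calc Real.exp (nuRoot β c * (t - s)) * |muRoot β c * φ s - deriv φ s|
          ≤ Real.exp (nuRoot β c * (t - s)) * (muRoot β c * M + M') :=
            mul_le_mul_of_nonneg_left hb (Real.exp_pos _).le
        _ = (muRoot β c * M + M') * Real.exp (nuRoot β c * (t - s)) := mul_comm _ _
    · simpa using (aux_expTendstoBot (t := t) hν).const_mul (muRoot β c * M + M')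
  have htendμ : Tendsto
      (fun s => Real.exp (muRoot β c * (t - s)) * (nuRoot β c * φ s - deriv φ s))
      atTop (nhds 0) := by
    apply squeeze_zero_norm (a := fun s => (|nuRoot β c| * M + M') * Real.exp (muRoot β c * (t - s)))
    · intro s
      rw [norm_mul, Real.norm_eq_abs, Real.norm_eq_abs, abs_of_pos (Real.exp_pos _)]
      have hb : |nuRoot β c * φ s - deriv φ s| ≤ |nuRoot β c| * M + M' := by
        calc |nuRoot β c * φ s - deriv φ s| ≤ |nuRoot β c * φ s| + |deriv φ s| :=
              abs_sub _ _
          _ = |nuRoot β c| * |φ s| + |deriv φ s| := by rw [abs_mul]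
          _ ≤ |nuRoot β c| * M + M' :=
              add_le_add (mul_le_mul_of_nonneg_left (hM s) (abs_nonneg _)) (hM' s)
      calc Real.exp (muRoot β c * (t - s)) * |nuRoot β c * φ s - deriv φ s|
          ≤ Real.exp (muRoot β c * (t - s)) * (|nuRoot β c| * M + M') :=
            mul_le_mul_of_nonneg_left hb (Real.exp_pos _).le
        _ = (|nuRoot β c| * M + M') * Real.exp (muRoot β c * (t - s)) := mul_comm _ _
    · simpa using (aux_expTendstoTop (t := t) hμ).const_mul (|nuRoot β c| * M + M')
  -- the two half-line integrals
  have e1 : (∫ s in Set.Iic t, Real.exp (nuRoot β c * (t - s)) * Gop K f g β c φ s)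
      = muRoot β c * φ t - deriv φ t := by
    have h := integral_Iic_of_hasDerivAt_of_tendsto'
      (f := fun s => Real.exp (nuRoot β c * (t - s)) * (muRoot β c * φ s - deriv φ s))
      (fun x _ => hPd x) hIntν htendν
    simpa using h
  have e2 : (∫ s in Set.Ioi t, Real.exp (muRoot β c * (t - s)) * Gop K f g β c φ s)
      = deriv φ t - nuRoot β c * φ t := by
    have h := integral_Ioi_of_hasDerivAt_of_tendsto'
      (f := fun s => Real.exp (muRoot β c * (t - s)) * (nuRoot β c * φ s - deriv φ s))
      (fun x _ => hQd x) hIntμ htendμ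
    simp only [sub_self, mul_zero, Real.exp_zero, one_mul, zero_sub] at h
    linarith [h]
  have hXY : (muRoot β c * φ t - deriv φ t) + (deriv φ t - nuRoot β c * φ t)
      = Real.sqrt (c ^ 2 + 4 * β) * φ t := by
    rw [← hsub]; ring
  have part1 : φ t = (Real.sqrt (c ^ 2 + 4 * β))⁻¹ *
      ((∫ s in Set.Iic t, Real.exp (nuRoot β c * (t - s)) * Gop K f g β c φ s) +
        ∫ s in Set.Ioi t, Real.exp (muRoot β c * (t - s)) * Gop K f g β c φ s) := by
    rw [e1, e2, hXY, ← mul_assoc, inv_mul_cancel₀ hσpos.ne', one_mul]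
  refine ⟨part1, ?_⟩
  -- second representation via k1
  have hk1Iic : EqOn (fun s => k1 β c (t - s) * Gop K f g β c φ s)
      (fun s => (Real.sqrt (c ^ 2 + 4 * β))⁻¹ *
        (Real.exp (nuRoot β c * (t - s)) * Gop K f g β c φ s)) (Iic t) := by
    intro s hs
    have h0 : (0:ℝ) ≤ t - s := by simpa using sub_nonneg.mpr hs.out
    simp only [k1, if_pos h0]
    ring
  have hk1Ioi : EqOn (fun s => k1 β c (t - s) * Gop K f g β c φ s)
      (fun s => (Real.sqrt (c ^ 2 + 4 * β))⁻¹ *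
        (Real.exp (muRoot β c * (t - s)) * Gop K f g β c φ s)) (Ioi t) := by
    intro s hs
    have h0 : ¬ (0:ℝ) ≤ t - s := by
      simp only [not_le]
      have : t < s := hs.out
      linarith
    simp only [k1, if_neg h0]
    ring
  have hi1' : IntegrableOn (fun s => (Real.sqrt (c ^ 2 + 4 * β))⁻¹ *
      (Real.exp (nuRoot β c * (t - s)) * Gop K f g β c φ s)) (Iic t) :=
    hIntν.const_mul _
  have hi2' : IntegrableOn (fun s => (Real.sqrt (c ^ 2 + 4 * β))⁻¹ *
      (Real.exp (muRoot β c * (t - s)) * Gop K f g β c φ s)) (Ioi t) :=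
    hIntμ.const_mul _
  have hi1 : IntegrableOn (fun s => k1 β c (t - s) * Gop K f g β c φ s) (Iic t) :=
    hi1'.congr_fun hk1Iic.symm measurableSet_Iic
  have hi2 : IntegrableOn (fun s => k1 β c (t - s) * Gop K f g β c φ s) (Ioi t) :=
    hi2'.congr_fun hk1Ioi.symm measurableSet_Ioi
  have hsplit : (∫ s : ℝ, k1 β c (t - s) * Gop K f g β c φ s)
      = (∫ s in Set.Iic t, k1 β c (t - s) * Gop K f g β c φ s)
        + ∫ s in Set.Ioi t, k1 β c (t - s) * Gop K f g β c φ s := by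
    rw [← setIntegral_union (Iic_disjoint_Ioi le_rfl) measurableSet_Ioi hi1 hi2,
      Iic_union_Ioi, setIntegral_univ]
  have hc1 : (∫ s in Set.Iic t, k1 β c (t - s) * Gop K f g β c φ s)
      = (Real.sqrt (c ^ 2 + 4 * β))⁻¹ * (muRoot β c * φ t - deriv φ t) := by
    rw [setIntegral_congr_fun measurableSet_Iic hk1Iic, integral_const_mul, e1]
  have hc2 : (∫ s in Set.Ioi t, k1 β c (t - s) * Gop K f g β c φ s)
      = (Real.sqrt (c ^ 2 + 4 * β))⁻¹ * (deriv φ t - nuRoot β c * φ t) := by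
    rw [setIntegral_congr_fun measurableSet_Ioi hk1Ioi, integral_const_mul, e2]
  rw [hsplit, hc1, hc2, ← mul_add, hXY, ← mul_assoc, inv_mul_cancel₀ hσpos.ne', one_mul]
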